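/- Let θ: A → A^λ be a bijective substitution of constant length λ ≥ 2 on a finite alphabet A, with column maps σ_i(a) := θ(a)[i] bijections of A and σ_0 = id_A. Let G ≤ Sym(A) be the subgroup generated by σ_0, σ_1, …, σ_{λ-1}, and define θ̄: G → G^λ by θ̄(τ) = (σ_0∘τ, σ_1∘τ, …, σ_{λ-1}∘τ). Then θ̄ is a primitive substitution of constant length λ on the finite alphabet G: there exists n ≥ 1 such that for all τ, τ' ∈ G there is an index k with θ̄^n(τ)[k] = τ'. -/
import Mathlib


/-- The `n`-th iterate of a substitution of constant length `l`:
`substIter l θ n a k` is the `k`-th letter of the word `θⁿ(a)` (of length `lⁿ`);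
the substitution `θ : A → ℕ → A` sends a letter to a word of length `l`
(modelled as a function on `ℕ`, only the values at indices `< l` being relevant). -/
def substIter {A : Type*} (l : ℕ) (θ : A → ℕ → A) : ℕ → A → ℕ → A
  | 0, a, _ => a
  | n + 1, a, k => θ (substIter l θ n a (k / l)) (k % l)

/-- **The group cover of a bijective substitution is a primitive substitution.**
Let `θ : A → A^l` be a bijective substitution of constant length `l ≥ 2` with column
permutations `σ_i` (`θ(a)[i] = σ_i a`), `σ_0 = id`, which is primitive.  Let
`G ≤ Sym(A)` be the subgroup generated by `σ_0, …, σ_{l-1}` and let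
`θ̄(τ) = (σ_0 ∘ τ, …, σ_{l-1} ∘ τ)` be the group cover substitution on the (finite)
alphabet `G`.  Then `θ̄` is primitive: there is `n ≥ 1` such that for all `τ, τ' ∈ G`
some letter of `θ̄ⁿ(τ)` equals `τ'`. -/
theorem stmt_6 {A : Type*} [Fintype A] [DecidableEq A]
    (l : ℕ) (hl : 2 ≤ l)
    (σ : ℕ → Equiv.Perm A) (hσ0 : σ 0 = 1)
    (hprim : ∃ n : ℕ, 1 ≤ n ∧ ∀ a a' : A, ∃ k : ℕ, k < l ^ n ∧
      substIter l (fun a i => σ i a) n a k = a') :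
    ∃ n : ℕ, 1 ≤ n ∧
      ∀ τ τ' : Equiv.Perm A,
        τ ∈ Subgroup.closure (σ '' Set.Iio l) → τ' ∈ Subgroup.closure (σ '' Set.Iio l) →
        ∃ k : ℕ, k < l ^ n ∧
          substIter l (fun (τ : Equiv.Perm A) (i : ℕ) => σ i * τ) n τ k = τ' := by
  classical
  clear hprim
  have hl0 : 0 < l := by omega
  set θ : Equiv.Perm A → ℕ → Equiv.Perm A := fun τ i => σ i * τ with hθ
  -- substIter splits off the translation part
  have key : ∀ n k (τ : Equiv.Perm A),
      substIter l θ n τ k = substIter l θ n 1 k * τ := by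
    intro n
    induction n with
    | zero => intro k τ; simp [substIter]
    | succ n ih =>
      intro k τ
      simp only [substIter]
      rw [ih (k / l) τ]
      simp only [hθ, mul_assoc]
  set S : Set (Equiv.Perm A) := σ '' Set.Iio l with hS
  -- achieved elements
  set ach : ℕ → Equiv.Perm A → Prop :=
    fun n g => ∃ k : ℕ, k < l ^ n ∧ substIter l θ n 1 k = g with hach
  have ach_one : ach 0 1 := ⟨0, by simp [substIter]⟩
  have ach_mem : ∀ g ∈ S, ach 1 g := by
    rintro g ⟨i, hi, rfl⟩
    refine ⟨i, by simpa using hi, ?_⟩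
    simp only [substIter, Nat.mod_eq_of_lt hi, hθ, mul_one]
  have split : ∀ n m k1 k2, k1 < l ^ n → k2 < l ^ m →
      substIter l θ (n + m) 1 (k1 + l ^ n * k2)
        = substIter l θ n 1 k1 * substIter l θ m 1 k2 := by
    intro n
    induction n with
    | zero =>
      intro m k1 k2 hk1 _
      have hk0 : k1 = 0 := by simpa [Nat.lt_one_iff] using hk1
      subst hk0
      simp [substIter]
    | succ n ih =>
      intro m k1 k2 hk1 hk2
      have h1 : k1 + l ^ (n + 1) * k2 = k1 + l * (l ^ n * k2) := by ring
      rw [Nat.succ_add, h1]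
      simp only [substIter, Nat.add_mul_mod_self_left, Nat.add_mul_div_left _ _ hl0]
      have hq : k1 / l < l ^ n := Nat.div_lt_of_lt_mul (by rw [← pow_succ']; exact hk1)
      rw [ih m (k1 / l) k2 hq hk2]
      simp only [hθ, mul_assoc]
  have ach_mul : ∀ {n m g h}, ach n g → ach m h → ach (n + m) (g * h) := by
    rintro n m g h ⟨k1, hk1, rfl⟩ ⟨k2, hk2, rfl⟩
    refine ⟨k1 + l ^ n * k2, ?_, split n m k1 k2 hk1 hk2⟩
    calc k1 + l ^ n * k2 < l ^ n * (k2 + 1) := by nlinarith [pow_pos hl0 n]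
      _ ≤ l ^ n * l ^ m := by
          exact Nat.mul_le_mul_left _ (by omega)
      _ = l ^ (n + m) := (pow_add l n m).symm
  have ach_mono : ∀ {n g}, ach n g → ach (n + 1) g := by
    rintro n g ⟨k, hk, rfl⟩
    refine ⟨l * k, ?_, ?_⟩
    · rw [pow_succ, mul_comm (l ^ n) l]; exact (Nat.mul_lt_mul_left hl0).mpr hk
    · simp only [substIter, Nat.mul_mod_right, Nat.mul_div_cancel_left _ hl0, hθ, hσ0, one_mul]
  have ach_le : ∀ {n N g}, n ≤ N → ach n g → ach N g := by
    intro n N g hle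
    induction N, hle using Nat.le_induction with
    | base => exact id
    | succ N _ ih => exact fun h => ach_mono (ih h)
  -- every element of the submonoid closure is achieved
  have ach_submonoid : ∀ g ∈ Submonoid.closure S, ∃ n, ach n g := by
    intro g hg
    induction hg using Submonoid.closure_induction with
    | mem x hx => exact ⟨1, ach_mem x hx⟩
    | one => exact ⟨0, ach_one⟩
    | mul x y _ _ hx hy =>
      obtain ⟨n, hn⟩ := hx; obtain ⟨m, hm⟩ := hy
      exact ⟨n + m, ach_mul hn hm⟩
  -- the submonoid closure is a subgroup (finite group)
  have hinv : ∀ g ∈ Submonoid.closure S, g⁻¹ ∈ Submonoid.closure S := by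
    intro g hg
    have ho : 0 < orderOf g := orderOf_pos g
    have : g⁻¹ = g ^ (orderOf g - 1) := inv_eq_of_mul_eq_one_right (by
      rw [← pow_succ', Nat.sub_add_cancel ho]; exact pow_orderOf_eq_one g)
    rw [this]
    exact pow_mem hg _
  set G' : Subgroup (Equiv.Perm A) :=
    { toSubmonoid := Submonoid.closure S, inv_mem' := fun {g} hg => hinv g hg } with hG'
  have hle : Subgroup.closure S ≤ G' :=
    (Subgroup.closure_le G').mpr Submonoid.subset_closure
  -- choose a uniform n
  set F : Equiv.Perm A → ℕ := fun g => if h : ∃ n, ach n g then Nat.find h else 0 with hF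
  set N : ℕ := Finset.univ.sup F + 1 with hN
  refine ⟨N, by omega, ?_⟩
  intro τ τ' hτ hτ'
  have hg : τ' * τ⁻¹ ∈ Submonoid.closure S := hle (mul_mem hτ' (inv_mem hτ))
  obtain ⟨n, hn⟩ := ach_submonoid _ hg
  have hex : ∃ n, ach n (τ' * τ⁻¹) := ⟨n, hn⟩
  have hfind : ach (Nat.find hex) (τ' * τ⁻¹) := Nat.find_spec hex
  have hle2 : Nat.find hex ≤ N := by
    have : F (τ' * τ⁻¹) = Nat.find hex := by rw [hF]; simp [hex]
    have h2 : F (τ' * τ⁻¹) ≤ Finset.univ.sup F := Finset.le_sup (Finset.mem_univ _)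
    omega
  obtain ⟨k, hk, hkeq⟩ := ach_le hle2 hfind
  exact ⟨k, hk, by rw [key, hkeq, inv_mul_cancel_right]⟩
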